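/- Let p be an odd prime, x a nonzero square in F_p, and a in F_p such that a^2 - x is not a square in F_p. Working in the field F_p(√(a^2 - x)) ≅ F_{p^2}, the element (a + √(a^2 - x))^((p+1)/2) lies in F_p and its square equals x. -/

import Mathlib

/-- Correctness of Cipolla's algorithm: let `p` be an odd prime, `x` a nonzero
square in `F_p`, and `a ∈ F_p` with `a² - x` a nonsquare. In the field
`F_p(√(a²-x)) ≅ F_{p²}` (a field `F` of cardinality `p²` with a square root `s`
of `a² - x`), the element `(a + s)^((p+1)/2)` lies in `F_p` and its square is `x`. -/
theorem cipolla_correct (p : ℕ) [Fact p.Prime] (hodd : Odd p)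
    (x a : ZMod p) (hx : x ≠ 0) (hxsq : IsSquare x) (hns : ¬ IsSquare (a ^ 2 - x))
    (F : Type*) [Field F] [Algebra (ZMod p) F] (hF : Nat.card F = p ^ 2)
    (s : F) (hs : s ^ 2 = algebraMap (ZMod p) F (a ^ 2 - x)) :
    (∃ y : ZMod p, (algebraMap (ZMod p) F a + s) ^ ((p + 1) / 2) =
        algebraMap (ZMod p) F y) ∧
      ((algebraMap (ZMod p) F a + s) ^ ((p + 1) / 2)) ^ 2 =
        algebraMap (ZMod p) F x := by
  have hp : p.Prime := Fact.out
  have hp2 : p ≠ 2 := by rintro rfl; exact (Nat.not_odd_iff_even.mpr (by norm_num)) hodd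
  have hchar : ringChar (ZMod p) ≠ 2 := by rwa [ZMod.ringChar_zmod_n]
  set f := algebraMap (ZMod p) F
  have hfinj : Function.Injective f := (algebraMap (ZMod p) F).injective
  have hcF : CharP F p := charP_of_injective_algebraMap hfinj p
  -- d := a^2 - x is nonzero and a nonsquare, so Euler's criterion gives d^(p/2) = -1
  have hd0 : a ^ 2 - x ≠ 0 := by
    intro h
    exact hns (h ▸ IsSquare.zero)
  obtain ⟨k, hk⟩ := hodd
  have heuler : (a ^ 2 - x) ^ (p / 2) = -1 := by
    rcases FiniteField.pow_dichotomy hchar hd0 with h | h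
    · rw [ZMod.card] at h
      exact absurd ((FiniteField.isSquare_iff hchar hd0).mpr (by rwa [ZMod.card])) hns
    · rwa [ZMod.card] at h
  -- s^(p-1) = -1, hence s^p = -s
  have hp1 : p / 2 * 2 = p - 1 := by omega
  have hsp1 : s ^ (p - 1) = -1 := by
    rw [← hp1, pow_mul', hs, ← map_pow, heuler]
    simp
  have hsp : s ^ p = -s := by
    have : s ^ p = s ^ (p - 1) * s := by
      rw [← pow_succ]
      congr 1
      omega
    rw [this, hsp1]; ring
  -- Frobenius on f a
  have hap : (f a) ^ p = f a := by rw [← map_pow, ZMod.pow_card]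
  -- (a+s)^(p+1) = x
  have hfrob : (f a + s) ^ p = f a - s := by
    rw [add_pow_char (R := F), hap, hsp]; ring
  have hmain : ((f a + s) ^ ((p + 1) / 2)) ^ 2 = f x := by
    rw [← pow_mul]
    have : (p + 1) / 2 * 2 = p + 1 := by omega
    rw [this, pow_succ, hfrob]
    have : (f a - s) * (f a + s) = f a ^ 2 - s ^ 2 := by ring
    rw [this, hs, ← map_pow, ← map_sub]
    congr 1; ring
  refine ⟨?_, hmain⟩
  obtain ⟨u, hu⟩ := hxsq
  have h2 : ((f a + s) ^ ((p + 1) / 2)) ^ 2 = (f u) ^ 2 := by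
    rw [hmain, ← map_pow, hu]; ring_nf
  have := sq_eq_sq_iff_eq_or_eq_neg.mp h2
  rcases this with h | h
  · exact ⟨u, h⟩
  · exact ⟨-u, by rw [h, map_neg]⟩
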